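/- If x₀ is supported on T with m > 2|T| and y = Ax₀, then for any index k ∉ T and any L with |T|+1 ≤ L ≤ m−|T|−1, the truncated column a_k^L does NOT lie in the column span of the Hankel matrix Y = Hankel(y); i.e., sin∠(a_k^L, Ran Y) > 0. -/

import Mathlib

noncomputable def partialFourier (m n : ℕ) : Matrix (Fin m) (Fin n) ℂ :=
  Matrix.of fun j k => Complex.exp (2 * Real.pi * Complex.I * j * k / n)

def hankel (m L : ℕ) (y : Fin m → ℂ) : Matrix (Fin L) (Fin (m - L)) ℂ :=
  Matrix.of fun p q => y ⟨p.1 + q.1, by have := p.2; have := q.2; omega⟩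

noncomputable def sinAngle {L : ℕ} (v : EuclideanSpace ℂ (Fin L))
    (V : Submodule ℂ (EuclideanSpace ℂ (Fin L))) : ℝ :=
  ‖v - (V.orthogonalProjectionOnto v : EuclideanSpace ℂ (Fin L))‖ / ‖v‖

noncomputable def colSpan {L M : ℕ} (Y : Matrix (Fin L) (Fin M) ℂ) :
    Submodule ℂ (EuclideanSpace ℂ (Fin L)) :=
  Submodule.span ℂ (Set.range fun q : Fin M => (WithLp.toLp 2 (fun p => Y p q) : EuclideanSpace ℂ (Fin L)))

/-- The "node" map `j ↦ exp(2πi j / n)` is injective on `Fin n`. -/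
lemma fourier_node_injective (n : ℕ) (hn : 0 < n) :
    Function.Injective (fun j : Fin n => Complex.exp (2 * Real.pi * Complex.I * j / n)) := by
  intro i i' h
  have hnn : (n : ℂ) ≠ 0 := Nat.cast_ne_zero.mpr hn.ne'
  have hpi : (2 * (Real.pi : ℂ) * Complex.I) ≠ 0 := by
    simp [Real.pi_ne_zero, Complex.I_ne_zero]
  obtain ⟨g, hg⟩ := Complex.exp_eq_exp_iff_exists_int.mp h
  have h3 : (i : ℂ) = (i' : ℂ) + g * n := by
    have h2 : 2 * (Real.pi : ℂ) * Complex.I * (i : ℂ)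
        = 2 * (Real.pi : ℂ) * Complex.I * ((i' : ℂ) + g * n) := by
      field_simp at hg
      linear_combination (2 * (Real.pi : ℂ) * Complex.I) * hg
    have := mul_left_cancel₀ hpi h2
    exact this
  have h4 : (i : ℤ) = (i' : ℤ) + g * n := by exact_mod_cast h3
  have hi : (i : ℤ) < n := by exact_mod_cast i.2
  have hi' : (i' : ℤ) < n := by exact_mod_cast i'.2
  have hi0 : 0 ≤ (i : ℤ) := by positivity
  have hi'0 : 0 ≤ (i' : ℤ) := by positivity
  have hn' : (0 : ℤ) < n := by exact_mod_cast hn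
  have hg0 : g = 0 := by
    rcases lt_trichotomy g 0 with hlt | heq | hgt
    · have h5 : g * n ≤ -1 * n := mul_le_mul_of_nonneg_right (by omega) hn'.le
      linarith
    · exact heq
    · have h5 : 1 * n ≤ g * n := mul_le_mul_of_nonneg_right (by omega) hn'.le
      linarith
  have : (i : ℤ) = (i' : ℤ) := by rw [h4, hg0]; ring
  exact Fin.ext (by exact_mod_cast this)

/-- Any `≤ L` truncated Fourier columns (of length `L`) are linearly independent. -/
lemma fourier_truncated_li (n L : ℕ) (hn : 0 < n) (S : Finset (Fin n)) (hcard : S.card ≤ L) :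
    LinearIndependent ℂ (fun j : {x // x ∈ S} =>
      (WithLp.toLp 2 (fun p : Fin L => Complex.exp (2 * Real.pi * Complex.I * p * (j : Fin n) / n)) :
        EuclideanSpace ℂ (Fin L))) := by
  set t := S.card with ht
  let e : Fin t ≃o {x // x ∈ S} := S.orderIsoOfFin rfl
  set z : Fin t → ℂ := fun i => Complex.exp (2 * Real.pi * Complex.I * ((e i : Fin n) : ℂ) / n)
    with hz
  have hzinj : Function.Injective z := by
    intro i i' h
    have := fourier_node_injective n hn h
    exact e.injective (Subtype.ext this)
  have hdet : (Matrix.vandermonde z).det ≠ 0 :=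
    Matrix.det_vandermonde_ne_zero_iff.mpr hzinj
  have hrows : LinearIndependent ℂ (fun i : Fin t => Matrix.vandermonde z i) :=
    Matrix.linearIndependent_rows_iff_isUnit.mpr
      ((Matrix.isUnit_iff_isUnit_det _).mpr (isUnit_iff_ne_zero.mpr hdet))
  have hrows' : LinearIndependent ℂ (fun j : {x // x ∈ S} =>
      Matrix.vandermonde z (e.symm j)) := by
    rw [← linearIndependent_equiv e.toEquiv]
    convert hrows using 1
    funext i
    simp
  let R : EuclideanSpace ℂ (Fin L) →ₗ[ℂ] (Fin t → ℂ) :=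
    { toFun := fun v i => v (Fin.castLE hcard i)
      map_add' := fun _ _ => rfl
      map_smul' := fun _ _ => rfl }
  apply LinearIndependent.of_comp R
  convert hrows' using 1
  funext j i
  show Complex.exp (2 * Real.pi * Complex.I * ((Fin.castLE hcard i : Fin L) : ℂ) * (j : Fin n) / n)
      = z (e.symm j) ^ (i : ℕ)
  have he : ((e (e.symm j) : Fin n) : ℂ) = ((j : Fin n) : ℂ) := by
    rw [e.apply_symm_apply]
  rw [hz]
  simp only [he]
  rw [← Complex.exp_nat_mul]
  congr 1
  have : ((Fin.castLE hcard i : Fin L) : ℂ) = ((i : ℕ) : ℂ) := by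
    simp [Fin.castLE]
  rw [this]
  ring

/-- With `m > 2|T|`, `y = A x₀` supported on `T`, and `|T|+1 ≤ L ≤ m−|T|−1`, for any index
`k ∉ T` the truncated column `a_k^L` does not lie in the column span of `Hankel(y)`:
its angle with `Ran Y` has positive sine. -/
theorem column_outside_support_positive_angle (m n L : ℕ) (hmn : m ≤ n)
    (hspark : ∀ f : Fin m → Fin n, Function.Injective f →
      LinearIndependent ℂ (fun i : Fin m => fun j : Fin m => partialFourier m n j (f i)))
    (x₀ : Fin n → ℂ) (T : Finset (Fin n)) (hsupp : ∀ k, x₀ k ≠ 0 ↔ k ∈ T)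
    (hm : 2 * T.card < m) (hL1 : T.card + 1 ≤ L) (hL2 : L ≤ m - T.card - 1)
    (y : Fin m → ℂ) (hy : y = (partialFourier m n).mulVec x₀)
    (k : Fin n) (hk : k ∉ T) :
    0 < sinAngle (WithLp.toLp 2 (fun p : Fin L => partialFourier m n ⟨p.1, by have := p.2; omega⟩ k) :
        EuclideanSpace ℂ (Fin L)) (colSpan (hankel m L y)) := by
  have hn : 0 < n := by omega
  have hL0 : 0 < L := by omega
  -- the truncated columns
  set a : Fin n → EuclideanSpace ℂ (Fin L) := fun j =>
    (WithLp.toLp 2 (fun p : Fin L => Complex.exp (2 * Real.pi * Complex.I * p * j / n)) :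
      EuclideanSpace ℂ (Fin L)) with ha
  set v : EuclideanSpace ℂ (Fin L) :=
    (WithLp.toLp 2 (fun p : Fin L => partialFourier m n ⟨p.1, by have := p.2; omega⟩ k) :
      EuclideanSpace ℂ (Fin L)) with hv
  have hva : v = a k := by
    rfl
  -- Step 1: columns of the Hankel matrix lie in span of (a j), j ∈ T
  have hcolle : colSpan (hankel m L y) ≤ Submodule.span ℂ (a '' ↑T) := by
    rw [colSpan, Submodule.span_le]
    rintro _ ⟨q, rfl⟩
    have hcol : (WithLp.toLp 2 (fun p => hankel m L y p q) : EuclideanSpace ℂ (Fin L))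
        = ∑ j ∈ T, (x₀ j * Complex.exp (2 * Real.pi * Complex.I * q * j / n)) • a j := by
      ext p
      rw [WithLp.ofLp_sum, Finset.sum_apply]
      show y ⟨p.1 + q.1, _⟩ = _
      rw [hy]
      show ∑ j : Fin n, partialFourier m n ⟨p.1 + q.1, _⟩ j * x₀ j = _
      rw [← Finset.sum_subset (Finset.subset_univ T) (by
        intro j _ hj
        have : x₀ j = 0 := by
          by_contra h
          exact hj ((hsupp j).mp h)
        simp [this])]
      refine Finset.sum_congr rfl fun j hj => ?_
      show Complex.exp (2 * Real.pi * Complex.I * ((p.1 + q.1 : ℕ) : ℂ) * j / n) * x₀ j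
          = (x₀ j * Complex.exp (2 * Real.pi * Complex.I * q * j / n)) *
            Complex.exp (2 * Real.pi * Complex.I * p * j / n)
      have hE : Complex.exp (2 * Real.pi * Complex.I * ((p.1 + q.1 : ℕ) : ℂ) * j / n)
          = Complex.exp (2 * Real.pi * Complex.I * q * j / n) *
            Complex.exp (2 * Real.pi * Complex.I * p * j / n) := by
        rw [← Complex.exp_add]
        congr 1
        push_cast
        ring
      rw [hE]
      ring
    show (WithLp.toLp 2 (fun p => hankel m L y p q) : EuclideanSpace ℂ (Fin L)) ∈
      (Submodule.span ℂ (a '' ↑T) : Set (EuclideanSpace ℂ (Fin L)))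
    rw [SetLike.mem_coe, hcol]
    refine Submodule.sum_mem _ fun j hj => Submodule.smul_mem _ _ ?_
    exact Submodule.subset_span ⟨j, hj, rfl⟩
  -- Step 2: a k ∉ span of (a j), j ∈ T
  have hnotmem : a k ∉ Submodule.span ℂ (a '' ↑T) := by
    have hli := fourier_truncated_li n L hn (insert k T) (by
      rw [Finset.card_insert_of_notMem hk]; omega)
    have hli' : LinearIndependent ℂ (fun j : {x // x ∈ insert k T} => a (j : Fin n)) := hli
    have hkmem : k ∈ insert k T := Finset.mem_insert_self k T
    have hx : (⟨k, hkmem⟩ : {x // x ∈ insert k T}) ∉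
        {j : {x // x ∈ insert k T} | (j : Fin n) ∈ T} := by
      simp [hk]
    have := hli'.notMem_span_image (s := {j : {x // x ∈ insert k T} | (j : Fin n) ∈ T}) hx
    intro hmem
    apply this
    have himg : (fun j : {x // x ∈ insert k T} => a (j : Fin n)) ''
        {j : {x // x ∈ insert k T} | (j : Fin n) ∈ T} = a '' ↑T := by
      ext w
      constructor
      · rintro ⟨⟨j, hjmem⟩, hjT, rfl⟩
        exact ⟨j, hjT, rfl⟩
      · rintro ⟨j, hjT, rfl⟩
        exact ⟨⟨j, Finset.mem_insert_of_mem hjT⟩, hjT, rfl⟩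
    rw [himg]
    exact hmem
  -- Step 3: hence v ∉ colSpan, and v ≠ 0
  have hvnot : v ∉ colSpan (hankel m L y) := fun h => hnotmem (hva ▸ hcolle h)
  have hvne : v ≠ 0 := by
    intro h
    have h0 : v ⟨0, hL0⟩ = 0 := by rw [h]; rfl
    simp [hv, partialFourier] at h0
  -- Conclusion
  rw [sinAngle]
  apply div_pos
  · rw [norm_pos_iff]
    intro hsub
    apply hvnot
    have : v = ((colSpan (hankel m L y)).orthogonalProjectionOnto v :
        EuclideanSpace ℂ (Fin L)) := by
      rwa [sub_eq_zero] at hsub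
    rw [this]
    exact Submodule.coe_mem _
  · exact norm_pos_iff.mpr hvne
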